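/- Let W1 and W2 be B-DMCs with finite output alphabets Y1 and Y2, and let (W⁻, W⁺) be their irregular kernel transform. Then Z(W⁻) ≤ Z(W1) + Z(W2) − Z(W1)·Z(W2). -/
import Mathlib


open Finset Real

/-- A binary-input discrete memoryless channel (B-DMC): nonnegative entries
and each row (fixed input) sums to 1. -/
def IsBDMC {Y : Type*} [Fintype Y] (W : Y → ZMod 2 → ℝ) : Prop :=
  (∀ y x, 0 ≤ W y x) ∧ (∀ x, ∑ y, W y x = 1)

/-- Bhattacharyya parameter Z(W). -/
noncomputable def bhatt {Y : Type*} [Fintype Y] (W : Y → ZMod 2 → ℝ) : ℝ :=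
  ∑ y, Real.sqrt (W y 0 * W y 1)

/-- The minus-channel W⁻ of the irregular kernel transform. -/
noncomputable def Wminus {Y1 Y2 : Type*} (W1 : Y1 → ZMod 2 → ℝ)
    (W2 : Y2 → ZMod 2 → ℝ) : Y1 × Y2 → ZMod 2 → ℝ :=
  fun y u1 => ∑ u2 : ZMod 2, (1 / 2) * W1 y.1 (u1 + u2) * W2 y.2 u2

lemma key (a b c d : ℝ) (ha : 0 ≤ a) (hb : 0 ≤ b) (hc : 0 ≤ c) (hd : 0 ≤ d) :
    Real.sqrt ((a*c + b*d) * (a*d + b*c)) ≤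
      Real.sqrt (a*b) * (c + d) + Real.sqrt (c*d) * (a + b)
        - 2 * Real.sqrt (a*b) * Real.sqrt (c*d) := by
  obtain ⟨s, hs, rfl⟩ : ∃ s, 0 ≤ s ∧ s^2 = a := ⟨Real.sqrt a, Real.sqrt_nonneg a, Real.sq_sqrt ha⟩
  obtain ⟨t, ht, rfl⟩ : ∃ s, 0 ≤ s ∧ s^2 = b := ⟨Real.sqrt b, Real.sqrt_nonneg b, Real.sq_sqrt hb⟩
  obtain ⟨u, hu, rfl⟩ : ∃ s, 0 ≤ s ∧ s^2 = c := ⟨Real.sqrt c, Real.sqrt_nonneg c, Real.sq_sqrt hc⟩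
  obtain ⟨v, hv, rfl⟩ : ∃ s, 0 ≤ s ∧ s^2 = d := ⟨Real.sqrt d, Real.sqrt_nonneg d, Real.sq_sqrt hd⟩
  have hab : Real.sqrt (s^2 * t^2) = s * t := by
    rw [show s^2*t^2 = (s*t)^2 by ring, Real.sqrt_sq (mul_nonneg hs ht)]
  have hcd : Real.sqrt (u^2 * v^2) = u * v := by
    rw [show u^2*v^2 = (u*v)^2 by ring, Real.sqrt_sq (mul_nonneg hu hv)]
  rw [hab, hcd]
  set R := s * t * (u^2 + v^2) + u * v * (s^2 + t^2) - 2 * (s*t) * (u*v) with hR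
  have hRnn : 0 ≤ R := by
    nlinarith [mul_nonneg (mul_nonneg hs ht) (sq_nonneg (u-v)),
      mul_nonneg (mul_nonneg hu hv) (sq_nonneg s), mul_nonneg (mul_nonneg hu hv) (sq_nonneg t)]
  have hX : (s^2*u^2 + t^2*v^2) * (s^2*v^2 + t^2*u^2) ≤ R^2 := by
    nlinarith [mul_nonneg (mul_nonneg (mul_nonneg (mul_nonneg hs ht) hu) hv)
      (sq_nonneg ((s-t)*(u-v)))]
  calc Real.sqrt ((s^2*u^2 + t^2*v^2) * (s^2*v^2 + t^2*u^2)) ≤ Real.sqrt (R^2) :=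
        Real.sqrt_le_sqrt hX
    _ = R := Real.sqrt_sq hRnn

/-- Z(W⁻) ≤ Z(W1) + Z(W2) − Z(W1)·Z(W2). -/
theorem bhatt_Wminus_le {Y1 Y2 : Type*} [Fintype Y1] [Fintype Y2]
    (W1 : Y1 → ZMod 2 → ℝ) (W2 : Y2 → ZMod 2 → ℝ)
    (h1 : IsBDMC W1) (h2 : IsBDMC W2) :
    bhatt (Wminus W1 W2) ≤ bhatt W1 + bhatt W2 - bhatt W1 * bhatt W2 := by
  obtain ⟨h1n, h1s⟩ := h1
  obtain ⟨h2n, h2s⟩ := h2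
  have expand : bhatt (Wminus W1 W2) = ∑ y1 : Y1, ∑ y2 : Y2,
      (1/2) * Real.sqrt ((W1 y1 0 * W2 y2 0 + W1 y1 1 * W2 y2 1) *
        (W1 y1 0 * W2 y2 1 + W1 y1 1 * W2 y2 0)) := by
    unfold bhatt Wminus
    rw [Fintype.sum_prod_type]
    refine Finset.sum_congr rfl fun y1 _ => Finset.sum_congr rfl fun y2 _ => ?_
    have e0 : (∑ u2 : ZMod 2, (1/2) * W1 y1 ((0:ZMod 2) + u2) * W2 y2 u2)
        = (1/2) * (W1 y1 0 * W2 y2 0 + W1 y1 1 * W2 y2 1) := by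
      rw [show (Finset.univ : Finset (ZMod 2)) = {0, 1} by decide]
      simp; ring
    have e1 : (∑ u2 : ZMod 2, (1/2) * W1 y1 ((1:ZMod 2) + u2) * W2 y2 u2)
        = (1/2) * (W1 y1 1 * W2 y2 0 + W1 y1 0 * W2 y2 1) := by
      rw [show (Finset.univ : Finset (ZMod 2)) = {0, 1} by decide]
      simp [show ((1:ZMod 2)+1) = 0 by decide]; ring
    rw [e0, e1, show (1/2) * (W1 y1 0 * W2 y2 0 + W1 y1 1 * W2 y2 1) *
        ((1/2) * (W1 y1 1 * W2 y2 0 + W1 y1 0 * W2 y2 1))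
      = (1/4) * ((W1 y1 0 * W2 y2 0 + W1 y1 1 * W2 y2 1) *
        (W1 y1 0 * W2 y2 1 + W1 y1 1 * W2 y2 0)) by ring,
      Real.sqrt_mul (by norm_num : (0:ℝ) ≤ 1/4),
      show (1/4:ℝ) = (1/2)^2 by norm_num, Real.sqrt_sq (by norm_num : (0:ℝ) ≤ 1/2)]
  rw [expand]
  have hs2' : ∑ y : Y2, (W2 y 0 + W2 y 1) = 2 := by
    rw [Finset.sum_add_distrib, h2s 0, h2s 1]; norm_num
  have inner : ∀ y1 : Y1, ∑ y2 : Y2, (1/2) * (Real.sqrt (W1 y1 0 * W1 y1 1) * (W2 y2 0 + W2 y2 1)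
        + Real.sqrt (W2 y2 0 * W2 y2 1) * (W1 y1 0 + W1 y1 1)
        - 2 * Real.sqrt (W1 y1 0 * W1 y1 1) * Real.sqrt (W2 y2 0 * W2 y2 1))
      = Real.sqrt (W1 y1 0 * W1 y1 1) + (1/2) * (W1 y1 0 + W1 y1 1) * bhatt W2
        - Real.sqrt (W1 y1 0 * W1 y1 1) * bhatt W2 := by
    intro y1
    calc ∑ y2 : Y2, (1/2) * (Real.sqrt (W1 y1 0 * W1 y1 1) * (W2 y2 0 + W2 y2 1)
          + Real.sqrt (W2 y2 0 * W2 y2 1) * (W1 y1 0 + W1 y1 1)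
          - 2 * Real.sqrt (W1 y1 0 * W1 y1 1) * Real.sqrt (W2 y2 0 * W2 y2 1))
        = ∑ y2 : Y2, ((1/2) * Real.sqrt (W1 y1 0 * W1 y1 1) * (W2 y2 0 + W2 y2 1)
          + ((1/2) * (W1 y1 0 + W1 y1 1) - Real.sqrt (W1 y1 0 * W1 y1 1))
            * Real.sqrt (W2 y2 0 * W2 y2 1)) :=
        Finset.sum_congr rfl fun _ _ => by ring
      _ = (1/2) * Real.sqrt (W1 y1 0 * W1 y1 1) * (∑ y2 : Y2, (W2 y2 0 + W2 y2 1))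
          + ((1/2) * (W1 y1 0 + W1 y1 1) - Real.sqrt (W1 y1 0 * W1 y1 1)) * bhatt W2 := by
        rw [Finset.sum_add_distrib, ← Finset.mul_sum, ← Finset.mul_sum]; rfl
      _ = _ := by rw [hs2']; ring
  have bound : ∑ y1 : Y1, ∑ y2 : Y2,
      (1/2) * Real.sqrt ((W1 y1 0 * W2 y2 0 + W1 y1 1 * W2 y2 1) *
        (W1 y1 0 * W2 y2 1 + W1 y1 1 * W2 y2 0))
      ≤ ∑ y1 : Y1, (Real.sqrt (W1 y1 0 * W1 y1 1) + (1/2) * (W1 y1 0 + W1 y1 1) * bhatt W2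
        - Real.sqrt (W1 y1 0 * W1 y1 1) * bhatt W2) := by
    refine Finset.sum_le_sum fun y1 _ => ?_
    rw [← inner y1]
    refine Finset.sum_le_sum fun y2 _ => ?_
    have := key (W1 y1 0) (W1 y1 1) (W2 y2 0) (W2 y2 1)
      (h1n y1 0) (h1n y1 1) (h2n y2 0) (h2n y2 1)
    nlinarith [this]
  refine bound.trans (le_of_eq ?_)
  have hs1' : ∑ y : Y1, (W1 y 0 + W1 y 1) = 2 := by
    rw [Finset.sum_add_distrib, h1s 0, h1s 1]; norm_num
  rw [Finset.sum_sub_distrib, Finset.sum_add_distrib, ← Finset.sum_mul, ← Finset.sum_mul,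
    ← Finset.mul_sum, hs1']
  show bhatt W1 + 1/2 * 2 * bhatt W2 - bhatt W1 * bhatt W2 = _
  ring
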